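/- Let M = (E, 𝓑) be a matroid on a finite ground set E. Then the smallest affine subspace of ℝ^E containing the base configuration V_M has dimension |E| − c(M), where c(M) is the number of connected components of M. -/

import Mathlib

open MvPolynomial Set

noncomputable section

/-- `f` is an affine-linear polynomial (degree at most one). -/
def IsAffLin {ι : Type} (f : MvPolynomial ι ℝ) : Prop := f.totalDegree ≤ 1

/-- `f` is nonnegative on `V`. -/
def NonnegOn {ι : Type} (V : Set (ι → ℝ)) (f : MvPolynomial ι ℝ) : Prop :=
  ∀ v ∈ V, 0 ≤ eval v f

/-- `ℓ` is `k`-sos with respect to `V`: on `V` it agrees with a sum of squares of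
polynomials of degree at most `k`. -/
def IsKSos {ι : Type} (V : Set (ι → ℝ)) (k : ℕ) (ℓ : MvPolynomial ι ℝ) : Prop :=
  ∃ (s : ℕ) (h : Fin s → MvPolynomial ι ℝ),
    (∀ i, (h i).totalDegree ≤ k) ∧ ∀ v ∈ V, eval v ℓ = ∑ i, (eval v (h i)) ^ 2

/-- The Theta rank of a point configuration `V`. -/
def thetaRank {ι : Type} (V : Set (ι → ℝ)) : ℕ :=
  sInf {k | ∀ ℓ, IsAffLin ℓ → NonnegOn V ℓ → IsKSos V k ℓ}

/-- `F` is a face of `V`. -/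
def IsFaceOf {ι : Type} (V F : Set (ι → ℝ)) : Prop :=
  ∃ g, IsAffLin g ∧ NonnegOn V g ∧ F = {v ∈ V | eval v g = 0}

/-- `F` is a facet of `V`: an inclusion-maximal proper face. -/
def IsFacetOf {ι : Type} (V F : Set (ι → ℝ)) : Prop :=
  IsFaceOf V F ∧ F ≠ V ∧ ∀ F', IsFaceOf V F' → F' ≠ V → F ⊆ F' → F' = F

/-- `ℓ` is a facet-defining affine-linear function for `V`. -/
def IsFacetDefining {ι : Type} (V : Set (ι → ℝ)) (ℓ : MvPolynomial ι ℝ) : Prop :=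
  IsAffLin ℓ ∧ NonnegOn V ℓ ∧ IsFacetOf V {v ∈ V | eval v ℓ = 0}

/-- The levelness of a point configuration `V`. -/
def levelness {ι : Type} (V : Set (ι → ℝ)) : ℕ :=
  sInf {k | ∀ ℓ, IsFacetDefining V ℓ → ((fun v => eval v ℓ) '' V).ncard ≤ k}

/-- The base configuration of a matroid: the 0/1 indicator vectors of its bases. -/
def baseConfig {α : Type} (M : Matroid α) : Set (α → ℝ) :=
  {x | ∃ B, M.IsBase B ∧ x = Set.indicator B 1}

/-- A circuit of a matroid: an inclusion-minimal dependent set. -/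
def IsCircuit {α : Type} (M : Matroid α) (C : Set α) : Prop :=
  M.Dep C ∧ ∀ D, D ⊂ C → ¬ M.Dep D

/-- Two elements are related if they are equal or lie in a common circuit. -/
def ConnRel {α : Type} (M : Matroid α) (e f : α) : Prop :=
  e = f ∨ ∃ C, IsCircuit M C ∧ e ∈ C ∧ f ∈ C

/-- The number of connected components of a matroid: the number of equivalence
classes of ground set elements under the relation `ConnRel`. -/
def numComponents {α : Type} (M : Matroid α) : ℕ :=
  {S : Set α | ∃ e ∈ M.E, S = {f | ConnRel M e f}}.ncard

section CircuitTheory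

variable {α : Type} [Fintype α] {M : Matroid α} {C C₁ C₂ D I B : Set α} {e f g : α}

lemma IsCircuit.subset_ground (hC : IsCircuit M C) : C ⊆ M.E := hC.1.subset_ground

lemma IsCircuit.diff_singleton_indep (hC : IsCircuit M C) (he : e ∈ C) :
    M.Indep (C \ {e}) := by
  have h := hC.2 (C \ {e}) (sdiff_singleton_ssubset.mpr he)
  rw [Matroid.not_dep_iff (diff_subset.trans hC.subset_ground)] at h
  exact h

lemma IsCircuit.not_subset_indep (hC : IsCircuit M C) (hI : M.Indep I) : ¬ C ⊆ I :=
  fun hss => (hI.subset hss).not_dep hC.1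

lemma IsCircuit.eq_of_subset (hC₁ : IsCircuit M C₁) (hC₂ : IsCircuit M C₂) (h : C₁ ⊆ C₂) :
    C₁ = C₂ := by
  by_contra hne
  exact hC₂.2 C₁ (ssubset_of_subset_of_ne h hne) hC₁.1

lemma exists_circuit_subset (hD : M.Dep D) : ∃ C, C ⊆ D ∧ IsCircuit M C := by
  obtain ⟨C, ⟨hCD, hCdep⟩, hmin⟩ := exists_minimal_of_wellFoundedLT (fun D' => D' ⊆ D ∧ M.Dep D')
    ⟨D, subset_rfl, hD⟩
  refine ⟨C, hCD, hCdep, fun D' hss hdep => ?_⟩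
  exact hss.ne' (subset_antisymm (hmin ⟨hss.subset.trans hCD, hdep⟩ hss.subset) hss.subset)

lemma IsCircuit.mem_closure_diff_singleton (hC : IsCircuit M C) (he : e ∈ C) :
    e ∈ M.closure (C \ {e}) := by
  have hI := hC.diff_singleton_indep he
  have hdep : M.Dep (insert e (C \ {e})) := by
    rw [insert_diff_singleton, insert_eq_of_mem he]; exact hC.1
  exact ((hI.insert_dep_iff).mp hdep).1

/-- Weak circuit elimination. -/
lemma circuit_elim (hC₁ : IsCircuit M C₁) (hC₂ : IsCircuit M C₂) (hne : C₁ ≠ C₂)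
    (he : e ∈ C₁ ∩ C₂) : ∃ C, IsCircuit M C ∧ C ⊆ (C₁ ∪ C₂) \ {e} := by
  have hsub : (C₁ ∪ C₂) \ {e} ⊆ M.E :=
    diff_subset.trans (union_subset hC₁.subset_ground hC₂.subset_ground)
  have hdep : M.Dep ((C₁ ∪ C₂) \ {e}) := by
    rw [← Matroid.not_indep_iff hsub]
    intro hA
    obtain ⟨f, hf1, hf2⟩ : ∃ f, f ∈ C₁ ∧ f ∉ C₂ := by
      by_contra h
      push_neg at h
      exact hne (hC₁.eq_of_subset hC₂ h)
    have hef : f ≠ e := fun h => hf2 (h ▸ he.2)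
    set A := (C₁ ∪ C₂) \ {e} with hA_def
    have hfA : f ∈ A := ⟨Or.inl hf1, hef⟩
    set J := A \ {f} with hJ_def
    have hC₂J : C₂ \ {e} ⊆ J := by
      rintro x ⟨hx, hxe⟩
      exact ⟨⟨Or.inr hx, hxe⟩, fun h => hf2 (h ▸ hx)⟩
    have heJ : e ∈ M.closure J :=
      M.closure_subset_closure hC₂J (hC₂.mem_closure_diff_singleton he.2)
    have hC₁J : C₁ \ {f} ⊆ insert e J := by
      rintro x ⟨hx, hxf⟩
      by_cases hxe : x = e
      · exact Or.inl hxe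
      · exact Or.inr ⟨⟨Or.inl hx, hxe⟩, hxf⟩
    have hfJ : f ∈ M.closure J := by
      have h1 : f ∈ M.closure (insert e J) :=
        M.closure_subset_closure hC₁J (hC₁.mem_closure_diff_singleton hf1)
      rwa [Matroid.closure_insert_eq_of_mem_closure heJ] at h1
    exact (Matroid.indep_iff_forall_notMem_closure_diff hsub).mp hA hfA hfJ
  obtain ⟨C, hCss, hC⟩ := exists_circuit_subset hdep
  exact ⟨C, hC, hCss⟩

/-- Strong circuit elimination. -/
lemma circuit_strong_elim : ∀ n C₁ C₂ e f, (C₁ ∪ C₂).ncard ≤ n →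
    IsCircuit M C₁ → IsCircuit M C₂ → e ∈ C₁ ∩ C₂ → f ∈ C₁ \ C₂ →
    ∃ C, IsCircuit M C ∧ f ∈ C ∧ C ⊆ (C₁ ∪ C₂) \ {e} := by
  intro n
  induction n with
  | zero =>
    intro C₁ C₂ e f hn hC₁ hC₂ he hf
    have : e ∈ C₁ ∪ C₂ := Or.inl he.1
    simp [Set.ncard_eq_zero (Set.toFinite _)] at hn
    simp [hn] at this
  | succ n ih =>
    intro C₁ C₂ e f hn hC₁ hC₂ he hf
    have hne : C₁ ≠ C₂ := fun h => hf.2 (h ▸ hf.1)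
    obtain ⟨C₃, hC₃, hC₃ss⟩ := circuit_elim hC₁ hC₂ hne he
    by_cases hfC₃ : f ∈ C₃
    · exact ⟨C₃, hC₃, hfC₃, hC₃ss⟩
    -- C₃ ⊆ (C₁ ∪ C₂) \ {e}, f ∉ C₃, e ∉ C₃
    have heC₃ : e ∉ C₃ := fun h => (hC₃ss h).2 rfl
    obtain ⟨g, hgC₃, hgC₁⟩ : ∃ g, g ∈ C₃ ∧ g ∉ C₁ := by
      by_contra h
      push_neg at h
      exact heC₃ ((hC₃.eq_of_subset hC₁ h) ▸ he.1)
    have hgC₂ : g ∈ C₂ := ((hC₃ss hgC₃).1).resolve_left hgC₁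
    -- apply IH to (C₂, C₃) at g, keeping e
    have hsize1 : (C₂ ∪ C₃).ncard ≤ n := by
      have hss : C₂ ∪ C₃ ⊂ C₁ ∪ C₂ := by
        constructor
        · exact Set.union_subset Set.subset_union_right
            (hC₃ss.trans (Set.diff_subset)) 
        · intro hsub
          rcases hsub (Or.inl hf.1) with h | h
          · exact hf.2 h
          · exact hfC₃ h
      have := Set.ncard_lt_ncard hss (Set.toFinite _)
      omega
    obtain ⟨C₄, hC₄, heC₄, hC₄ss⟩ := ih C₂ C₃ g e hsize1 hC₂ hC₃ ⟨hgC₂, hgC₃⟩ ⟨he.2, heC₃⟩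
    -- apply IH to (C₁, C₄) at e, keeping f
    have hfC₄ : f ∉ C₄ := fun h => by
      rcases (hC₄ss h).1 with h' | h'
      · exact hf.2 h'
      · exact hfC₃ h'
    have hC₄sub : C₄ ⊆ C₁ ∪ C₂ := fun x hx => by
      rcases (hC₄ss hx).1 with h | h
      · exact Or.inr h
      · exact (hC₃ss h).1
    have hsize2 : (C₁ ∪ C₄).ncard ≤ n := by
      have hss : C₁ ∪ C₄ ⊂ C₁ ∪ C₂ := by
        constructor
        · exact Set.union_subset Set.subset_union_left hC₄sub
        · intro hsub
          rcases hsub (Or.inr hgC₂) with h | h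
          · exact hgC₁ h
          · rcases (hC₄ss h) with ⟨-, hgg⟩
            exact hgg rfl
      have := Set.ncard_lt_ncard hss (Set.toFinite _)
      omega
    obtain ⟨C₅, hC₅, hfC₅, hC₅ss⟩ := ih C₁ C₄ e f hsize2 hC₁ hC₄ ⟨he.1, heC₄⟩ ⟨hf.1, hfC₄⟩
    refine ⟨C₅, hC₅, hfC₅, hC₅ss.trans ?_⟩
    rintro x ⟨hx1, hx2⟩
    refine ⟨?_, hx2⟩
    rcases hx1 with h' | h'
    · exact Or.inl h'
    · exact hC₄sub h'

lemma IsCircuit.strong_elim (hC₁ : IsCircuit M C₁) (hC₂ : IsCircuit M C₂)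
    (he : e ∈ C₁ ∩ C₂) (hf : f ∈ C₁ \ C₂) :
    ∃ C, IsCircuit M C ∧ f ∈ C ∧ C ⊆ (C₁ ∪ C₂) \ {e} :=
  circuit_strong_elim (C₁ ∪ C₂).ncard C₁ C₂ e f le_rfl hC₁ hC₂ he hf

/-- Key transitivity ingredient: two intersecting circuits give a circuit through
any element of the first and any element of the second. -/
lemma exists_circuit_pair : ∀ n C₁ C₂ e g, (C₁ ∪ C₂).ncard ≤ n →
    IsCircuit M C₁ → IsCircuit M C₂ → e ∈ C₁ → g ∈ C₂ → (C₁ ∩ C₂).Nonempty →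
    ∃ C, IsCircuit M C ∧ e ∈ C ∧ g ∈ C := by
  intro n
  induction n with
  | zero =>
    intro C₁ C₂ e g hn hC₁ hC₂ he hg hint
    have : e ∈ C₁ ∪ C₂ := Or.inl he
    simp [Set.ncard_eq_zero (Set.toFinite _)] at hn
    simp [hn] at this
  | succ n ih =>
    intro C₁ C₂ e g hn hC₁ hC₂ he hg hint
    by_cases heC₂ : e ∈ C₂
    · exact ⟨C₂, hC₂, heC₂, hg⟩
    by_cases hgC₁ : g ∈ C₁
    · exact ⟨C₁, hC₁, he, hgC₁⟩
    obtain ⟨h, hh⟩ := hint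
    -- strong elim (C₁, C₂) at h keeping e
    obtain ⟨C₃, hC₃, heC₃, hC₃ss⟩ := hC₁.strong_elim hC₂ ⟨hh.1, hh.2⟩ ⟨he, heC₂⟩
    have hC₃sub : C₃ ⊆ C₁ ∪ C₂ := hC₃ss.trans diff_subset
    by_cases hgC₃ : g ∈ C₃
    · exact ⟨C₃, hC₃, heC₃, hgC₃⟩
    -- k ∈ C₃ \ C₁ ⊆ C₂ \ C₁
    obtain ⟨k, hkC₃, hkC₁⟩ : ∃ k, k ∈ C₃ ∧ k ∉ C₁ := by
      by_contra hcon
      push_neg at hcon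
      have := hC₃.eq_of_subset hC₁ hcon
      exact ((hC₃ss (this ▸ hh.1)).2) rfl
    have hkC₂ : k ∈ C₂ := (hC₃sub hkC₃).resolve_left hkC₁
    -- strong elim (C₂, C₃) at k keeping g
    obtain ⟨C₄, hC₄, hgC₄, hC₄ss⟩ := hC₂.strong_elim hC₃ ⟨hkC₂, hkC₃⟩ ⟨hg, hgC₃⟩
    have hkC₄ : k ∉ C₄ := fun hx => (hC₄ss hx).2 rfl
    have hC₄sub : C₄ ⊆ C₁ ∪ C₂ := fun x hx => by
      rcases (hC₄ss hx).1 with h' | h'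
      · exact Or.inr h'
      · exact hC₃sub h'
    by_cases heC₄ : e ∈ C₄
    · exact ⟨C₄, hC₄, heC₄, hgC₄⟩
    -- pair (C₁, C₄)
    have hint' : (C₁ ∩ C₄).Nonempty := by
      rw [Set.nonempty_iff_ne_empty]
      intro hdisj
      have hC₄C₂ : C₄ ⊆ C₂ \ {k} := by
        intro x hx
        have hxC₁ : x ∉ C₁ := fun hx1 => by
          have : x ∈ C₁ ∩ C₄ := ⟨hx1, hx⟩
          rw [hdisj] at this
          exact this
        refine ⟨?_, fun hxk => hxC₁ (by exact hxk ▸ (False.elim (hkC₄ (hxk ▸ hx))))⟩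
        rcases (hC₄ss hx).1 with h' | h'
        · exact h'
        · exact (hC₃sub h').resolve_left hxC₁
      have := hC₄.eq_of_subset hC₂ (hC₄C₂.trans diff_subset)
      exact hkC₄ (this ▸ hkC₂)
    have hsize : (C₁ ∪ C₄).ncard ≤ n := by
      have hss : C₁ ∪ C₄ ⊂ C₁ ∪ C₂ := by
        constructor
        · exact Set.union_subset Set.subset_union_left hC₄sub
        · intro hsub
          rcases hsub (Or.inr hkC₂) with h' | h'
          · exact hkC₁ h'
          · exact hkC₄ h'
      have := Set.ncard_lt_ncard hss (Set.toFinite _)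
      omega
    exact ih C₁ C₄ e g hsize hC₁ hC₄ he hgC₄ hint'

lemma ConnRel.symm' (h : ConnRel M e f) : ConnRel M f e := by
  rcases h with rfl | ⟨C, hC, h1, h2⟩
  · exact Or.inl rfl
  · exact Or.inr ⟨C, hC, h2, h1⟩

lemma ConnRel.trans' (h1 : ConnRel M e f) (h2 : ConnRel M f g) : ConnRel M e g := by
  rcases h1 with rfl | ⟨C₁, hC₁, he1, hf1⟩
  · exact h2
  rcases h2 with rfl | ⟨C₂, hC₂, hf2, hg2⟩
  · exact Or.inr ⟨C₁, hC₁, he1, hf1⟩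
  obtain ⟨C, hC, he, hg⟩ := exists_circuit_pair (C₁ ∪ C₂).ncard C₁ C₂ e g le_rfl
    hC₁ hC₂ he1 hg2 ⟨f, hf1, hf2⟩
  exact Or.inr ⟨C, hC, he, hg⟩

end CircuitTheory


section Exchange

variable {α : Type} [Fintype α] {M : Matroid α} {C C₁ C₂ B : Set α} {e f : α}

lemma circuit_unique_in_insert (hB : M.Indep B) (hfB : f ∉ B)
    (hC₁ : IsCircuit M C₁) (hC₂ : IsCircuit M C₂)
    (h1 : C₁ ⊆ insert f B) (h2 : C₂ ⊆ insert f B) : C₁ = C₂ := by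
  have hf1 : f ∈ C₁ := by
    by_contra hf
    exact hC₁.not_subset_indep hB (fun x hx => ((h1 hx).resolve_left (fun h => hf (h ▸ hx))))
  have hf2 : f ∈ C₂ := by
    by_contra hf
    exact hC₂.not_subset_indep hB (fun x hx => ((h2 hx).resolve_left (fun h => hf (h ▸ hx))))
  by_contra hne
  obtain ⟨C, hC, hss⟩ := circuit_elim hC₁ hC₂ hne ⟨hf1, hf2⟩
  refine hC.not_subset_indep hB (fun x hx => ?_)
  obtain ⟨hx1, hx2⟩ := hss hx
  have : x ∈ insert f B := by
    rcases hx1 with h' | h'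
    · exact h1 h'
    · exact h2 h'
  exact this.resolve_left hx2

/-- From a circuit through `e ≠ f`, produce a base exchange pair. -/
lemma exists_exchange_of_circuit (hC : IsCircuit M C) (he : e ∈ C) (hf : f ∈ C) (hef : e ≠ f) :
    ∃ B, M.IsBase B ∧ e ∈ B ∧ f ∉ B ∧ M.IsBase (insert f (B \ {e})) := by
  have hI : M.Indep (C \ {f}) := hC.diff_singleton_indep hf
  obtain ⟨B, hB, hCB⟩ := hI.exists_isBase_superset
  have heB : e ∈ B := hCB ⟨he, hef⟩
  have hfB : f ∉ B := by
    intro hfB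
    refine hC.not_subset_indep hB.indep (fun x hx => ?_)
    by_cases hxf : x = f
    · exact hxf ▸ hfB
    · exact hCB ⟨hx, hxf⟩
  have hCfB : C ⊆ insert f B := fun x hx => by
    by_cases hxf : x = f
    · exact Or.inl hxf
    · exact Or.inr (hCB ⟨hx, hxf⟩)
  have hind : M.Indep (insert f (B \ {e})) := by
    rw [← Matroid.not_dep_iff (insert_subset (hC.subset_ground hf)
      (diff_subset.trans hB.subset_ground))]
    intro hdep
    obtain ⟨C', hC'ss, hC'⟩ := exists_circuit_subset hdep
    have : C' = C := circuit_unique_in_insert hB.indep hfB hC' hC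
      (hC'ss.trans (insert_subset_insert diff_subset)) hCfB
    have heC' : e ∈ C' := this ▸ he
    rcases hC'ss heC' with h' | h'
    · exact hef h'
    · exact h'.2 rfl
  exact ⟨B, hB, heB, hfB, hB.exchange_isBase_of_indep hfB hind⟩

/-- Base exchange pairs come from circuits. -/
lemma connRel_of_exchange (hB : M.IsBase B) (hB' : M.IsBase (insert f (B \ {e})))
    (heB : e ∈ B) (hfB : f ∉ B) : ConnRel M e f := by
  have hfE : f ∈ M.E := hB'.subset_ground (mem_insert _ _)
  have hdep : M.Dep (insert f B) := hB.insert_dep ⟨hfE, hfB⟩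
  obtain ⟨C, hCss, hC⟩ := exists_circuit_subset hdep
  have hfC : f ∈ C := by
    by_contra hf
    exact hC.not_subset_indep hB.indep
      (fun x hx => (hCss hx).resolve_left (fun h => hf (h ▸ hx)))
  have heC : e ∈ C := by
    by_contra he
    refine hC.not_subset_indep hB'.indep (fun x hx => ?_)
    rcases hCss hx with h' | h'
    · exact Or.inl h'
    · exact Or.inr ⟨h', fun hxe => he (mem_singleton_iff.mp hxe ▸ hx)⟩
  exact Or.inr ⟨C, hC, heC, hfC⟩

end Exchange


section LinAlg

variable {α : Type} [Fintype α] (M : Matroid α)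

/-- The indicator vector of a single element. -/
def chi (e : α) : α → ℝ := Set.indicator {e} 1

lemma chi_same (e : α) : chi e e = 1 := by simp [chi]

lemma chi_other {a e : α} (h : a ≠ e) : chi e a = 0 := by simp [chi, h]

variable {M}

lemma indicator_sub_indicator_exchange {B : Set α} {e f : α} (heB : e ∈ B) (hfB : f ∉ B) :
    (Set.indicator B 1 : α → ℝ) - Set.indicator (insert f (B \ {e})) 1 = chi e - chi f := by
  have hef : e ≠ f := fun h => hfB (h ▸ heB)
  funext a
  simp only [Pi.sub_apply]
  by_cases hae : a = e
  · subst hae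
    rw [Set.indicator_of_mem heB, Set.indicator_of_notMem (by simp [hef, hfB] : a ∉ _),
      chi_same, chi_other hef]
    simp
  by_cases haf : a = f
  · subst haf
    rw [Set.indicator_of_notMem hfB, Set.indicator_of_mem (mem_insert _ _),
      chi_other (Ne.symm hef), chi_same]
    simp
  · rw [chi_other hae, chi_other haf]
    by_cases haB : a ∈ B
    · rw [Set.indicator_of_mem haB,
        Set.indicator_of_mem (show a ∈ insert f (B \ {e}) by simp [haB, hae])]
      simp
    · rw [Set.indicator_of_notMem haB,
        Set.indicator_of_notMem (show a ∉ insert f (B \ {e}) by simp [haf, haB])]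

/-- The generating set for the direction space. -/
def genSet (M : Matroid α) : Set (α → ℝ) :=
  {x | ∃ e f, ConnRel M e f ∧ e ≠ f ∧ x = chi e - chi f}

lemma base_diff_mem_span : ∀ n (B B' : Set α), (B \ B').ncard ≤ n → M.IsBase B → M.IsBase B' →
    (Set.indicator B 1 : α → ℝ) - Set.indicator B' 1 ∈ Submodule.span ℝ (genSet M) := by
  intro n
  induction n with
  | zero =>
    intro B B' hn hB hB'
    rw [Nat.le_zero, Set.ncard_eq_zero (Set.toFinite _), diff_eq_empty] at hn
    rw [hB.eq_of_subset_isBase hB' hn, sub_self]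
    exact Submodule.zero_mem _
  | succ n ih =>
    intro B B' hn hB hB'
    by_cases hBB' : B \ B' = ∅
    · rw [diff_eq_empty] at hBB'
      rw [hB.eq_of_subset_isBase hB' hBB', sub_self]
      exact Submodule.zero_mem _
    obtain ⟨e, he⟩ := Set.nonempty_iff_ne_empty.mpr hBB'
    obtain ⟨f, hf, hB''⟩ := hB.exchange hB' he
    set B'' := insert f (B \ {e}) with hB''def
    have hfB : f ∉ B := hf.2
    have heB : e ∈ B := he.1
    have hconn : ConnRel M e f := connRel_of_exchange hB hB'' heB hfB
    have hef : e ≠ f := fun h => hfB (h ▸ heB)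
    have hstep : (Set.indicator B 1 : α → ℝ) - Set.indicator B'' 1 ∈ Submodule.span ℝ (genSet M) := by
      rw [indicator_sub_indicator_exchange heB hfB]
      exact Submodule.subset_span ⟨e, f, hconn, hef, rfl⟩
    have hdiff : B'' \ B' = (B \ B') \ {e} := by
      ext x
      simp only [hB''def, mem_diff, mem_insert_iff, mem_singleton_iff]
      constructor
      · rintro ⟨rfl | ⟨hxB, hxe⟩, hxB'⟩
        · exact absurd hf.1 hxB'
        · exact ⟨⟨hxB, hxB'⟩, hxe⟩
      · rintro ⟨⟨hxB, hxB'⟩, hxe⟩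
        exact ⟨Or.inr ⟨hxB, hxe⟩, hxB'⟩
    have hcard : (B'' \ B').ncard ≤ n := by
      rw [hdiff]
      have h1 : ((B \ B') \ {e}).ncard < (B \ B').ncard :=
        Set.ncard_lt_ncard (by
          refine ⟨diff_subset, fun hsub => ?_⟩
          exact (hsub he).2 rfl) (Set.toFinite _)
      omega
    have hrest := ih B'' B' hcard hB'' hB'
    have : (Set.indicator B 1 : α → ℝ) - Set.indicator B' 1 =
        ((Set.indicator B 1 : α → ℝ) - Set.indicator B'' 1) +
        ((Set.indicator B'' 1 : α → ℝ) - Set.indicator B' 1) := by ring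
    rw [this]
    exact Submodule.add_mem _ hstep hrest

lemma vectorSpan_baseConfig_eq : vectorSpan ℝ (baseConfig M) = Submodule.span ℝ (genSet M) := by
  apply le_antisymm
  · rw [vectorSpan_def, Submodule.span_le]
    rintro x hx
    rw [Set.mem_vsub] at hx
    obtain ⟨p, hp, q, hq, rfl⟩ := hx
    obtain ⟨B, hB, rfl⟩ := hp
    obtain ⟨B', hB', rfl⟩ := hq
    exact base_diff_mem_span (B \ B').ncard B B' le_rfl hB hB'
  · rw [Submodule.span_le]
    rintro x ⟨e, f, hconn, hef, rfl⟩
    obtain ⟨C, hC, heC, hfC⟩ := hconn.resolve_left hef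
    obtain ⟨B, hB, heB, hfB, hB''⟩ := exists_exchange_of_circuit hC heC hfC hef
    rw [← indicator_sub_indicator_exchange heB hfB]
    exact vsub_mem_vectorSpan ℝ ⟨B, hB, rfl⟩ ⟨_, hB'', rfl⟩

end LinAlg


section Counting

variable {α : Type} [Fintype α] {M : Matroid α} {e f : α}

lemma ConnRel.refl' (e : α) : ConnRel M e e := Or.inl rfl

lemma ConnRel.mem_ground (h : ConnRel M e f) (hef : e ≠ f) : e ∈ M.E ∧ f ∈ M.E := by
  obtain ⟨C, hC, heC, hfC⟩ := h.resolve_left hef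
  exact ⟨hC.subset_ground heC, hC.subset_ground hfC⟩

/-- A canonical representative of the connectivity class. -/
lemma exists_connRel (M : Matroid α) (e : α) : ∃ f, ConnRel M e f := ⟨e, ConnRel.refl' e⟩

def rep (M : Matroid α) (e : α) : α := (exists_connRel M e).choose

lemma connRel_rep (M : Matroid α) (e : α) : ConnRel M e (rep M e) :=
  (exists_connRel M e).choose_spec

private lemma choose_congr {β : Type} {p q : β → Prop} (h : p = q) (hp : ∃ x, p x)
    (hq : ∃ x, q x) : hp.choose = hq.choose := by subst h; rfl

lemma rep_eq_of_connRel (h : ConnRel M e f) : rep M e = rep M f := by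
  have hpr : ConnRel M e = ConnRel M f := by
    funext x
    exact propext ⟨fun h' => (h.symm').trans' h', fun h' => h.trans' h'⟩
  exact choose_congr hpr _ _

lemma rep_rep (M : Matroid α) (e : α) : rep M (rep M e) = rep M e :=
  (rep_eq_of_connRel (connRel_rep M e)).symm

lemma rep_mem_ground (he : e ∈ M.E) : rep M e ∈ M.E := by
  by_cases h : e = rep M e
  · exact h ▸ he
  · exact ((connRel_rep M e).mem_ground h).2

lemma cls_eq_of_connRel (h : ConnRel M e f) :
    {g | ConnRel M e g} = {g | ConnRel M f g} := by
  ext x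
  exact ⟨fun h' => (h.symm').trans' h', fun h' => h.trans' h'⟩

/-- The set of canonical representatives. -/
def repSet (M : Matroid α) : Set α := {e | e ∈ M.E ∧ rep M e = e}

lemma repSet_subset : repSet M ⊆ M.E := fun _ h => h.1

lemma ncard_repSet : (repSet M).ncard = numComponents M := by
  have himg : {S : Set α | ∃ e ∈ M.E, S = {f | ConnRel M e f}} =
      (fun e => {f | ConnRel M e f}) '' repSet M := by
    ext S
    constructor
    · rintro ⟨e, he, rfl⟩
      refine ⟨rep M e, ⟨rep_mem_ground he, rep_rep M e⟩, ?_⟩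
      exact (cls_eq_of_connRel (connRel_rep M e)).symm
    · rintro ⟨e, he, rfl⟩
      exact ⟨e, he.1, rfl⟩
  rw [numComponents, himg]
  refine (Set.ncard_image_of_injOn ?_).symm
  intro a ha b hb hab
  have hcab : ConnRel M a b := by
    have h1 : {f | ConnRel M a f} = {f | ConnRel M b f} := hab
    exact (Set.ext_iff.mp h1 b).mpr (ConnRel.refl' b)
  rw [← ha.2, ← hb.2]
  exact rep_eq_of_connRel hcab

/-- The candidate basis family for the direction space. -/
def famV (M : Matroid α) (e : α) : α → ℝ := chi e - chi (rep M e)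

lemma famV_apply_self (ha : e ∈ M.E \ repSet M) : famV M e e = 1 := by
  have hre : e ≠ rep M e := fun h => ha.2 ⟨ha.1, h.symm⟩
  rw [famV, Pi.sub_apply, chi_same, chi_other hre, sub_zero]

lemma famV_apply_ne {a : α} (ha : a ∈ M.E \ repSet M) (hea : e ≠ a) :
    famV M e a = 0 := by
  have hra : a ≠ rep M e := by
    intro h
    have : rep M a = a := by rw [h, rep_rep, ← h]
    exact ha.2 ⟨ha.1, this⟩
  rw [famV, Pi.sub_apply, chi_other (Ne.symm hea), chi_other hra, sub_zero]

lemma span_genSet_eq : Submodule.span ℝ (genSet M) =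
    Submodule.span ℝ (famV M '' (M.E \ repSet M)) := by
  have hmem : ∀ e ∈ M.E, famV M e ∈ Submodule.span ℝ (famV M '' (M.E \ repSet M)) := by
    intro e he
    by_cases hr : e ∈ repSet M
    · have : famV M e = 0 := by
        rw [famV, hr.2, sub_self]
      rw [this]
      exact Submodule.zero_mem _
    · exact Submodule.subset_span ⟨e, ⟨he, hr⟩, rfl⟩
  apply le_antisymm
  · rw [Submodule.span_le]
    rintro x ⟨e, f, hconn, hef, rfl⟩
    obtain ⟨heE, hfE⟩ := hconn.mem_ground hef
    have hrep : rep M e = rep M f := rep_eq_of_connRel hconn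
    have : chi e - chi f = famV M e - famV M f := by
      rw [famV, famV, hrep]
      ring
    rw [this]
    exact Submodule.sub_mem _ (hmem e heE) (hmem f hfE)
  · rw [Submodule.span_le]
    rintro x ⟨e, ⟨heE, her⟩, rfl⟩
    have hee : e ≠ rep M e := fun h => her ⟨heE, h.symm⟩
    exact Submodule.subset_span ⟨e, rep M e, connRel_rep M e, hee, rfl⟩

lemma linearIndependent_famV :
    LinearIndependent ℝ (fun x : ↥(M.E \ repSet M) => famV M x) := by
  haveI : Fintype ↥(M.E \ repSet M) := Fintype.ofFinite _
  rw [Fintype.linearIndependent_iff]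
  intro g hg i
  have := congrFun hg (i : α)
  simp only [Finset.sum_apply, Pi.smul_apply, smul_eq_mul, Pi.zero_apply] at this
  rw [Finset.sum_eq_single i] at this
  · rwa [famV_apply_self i.2, mul_one] at this
  · intro b _ hbi
    rw [famV_apply_ne i.2 (fun h => hbi (Subtype.ext h)), mul_zero]
  · intro h
    exact absurd (Finset.mem_univ i) h

lemma finrank_span_genSet :
    Module.finrank ℝ (Submodule.span ℝ (genSet M)) = M.E.ncard - numComponents M := by
  haveI : Fintype ↥(M.E \ repSet M) := Fintype.ofFinite _
  rw [span_genSet_eq, Set.image_eq_range]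
  rw [finrank_span_eq_card linearIndependent_famV]
  have h1 : Fintype.card ↥(M.E \ repSet M) = (M.E \ repSet M).ncard := by
    rw [Set.ncard_eq_toFinset_card']
    simp [Set.toFinset_card]
  rw [h1, Set.ncard_diff repSet_subset, ncard_repSet]

end Counting


/-- For a matroid `M` on a finite ground set, the smallest affine subspace
containing the base configuration `V_M` has dimension `|E| − c(M)`, where `c(M)` is the
number of connected components of `M`. -/
theorem finrank_affineSpan_baseConfig {α : Type} [Fintype α] (M : Matroid α) :
    Module.finrank ℝ (affineSpan ℝ (baseConfig M)).direction =
      M.E.ncard - numComponents M := by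
  rw [direction_affineSpan, vectorSpan_baseConfig_eq, finrank_span_genSet]
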